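/- Let u be a positive integer and let p be a prime divisor of u with p^c exactly dividing u (p^c | u but p^{c+1} ∤ u). Let w be a positive integer such that p does not divide w and p is self-conjugate modulo w. If X ∈ ℤ[ζ_w] satisfies X·conj(X) = u, then c is even. -/

import Mathlib

open Polynomial WittVector

private lemma witt_core (u p c w r : ℕ) [Fact p.Prime] (hp : p.Prime) (hw : 0 < w)
    (hc : p ^ c ∣ u ∧ ¬ p ^ (c + 1) ∣ u)
    (hr : w ∣ p ^ r + 1)
    {k : Type} [Field k] [CharP k p] [PerfectRing k p]
    (α : k) (hα : IsPrimitiveRoot α w)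
    (g q : Polynomial ℤ)
    (hgq : g * g.comp (Polynomial.X ^ (w - 1)) - Polynomial.C (u : ℤ)
      = Polynomial.cyclotomic w ℤ * q) :
    Even c := by

  haveI : IsDiscreteValuationRing (WittVector p k) := WittVector.isDiscreteValuationRing (k := k)
  -- the Teichmüller lift of α is a primitive w-th root of unity in 𝕎 k
  set t : WittVector p k := WittVector.teichmuller p α with ht_def
  have htw : ∀ l : ℕ, t ^ l = 1 ↔ α ^ l = 1 := by
    intro l
    constructor
    · intro h
      have h2 : WittVector.teichmuller p (α ^ l) = (1 : WittVector p k) := by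
        rw [map_pow]; exact h
      have h3 := congrArg (fun z : WittVector p k => z.coeff 0) h2
      simpa only [WittVector.teichmuller_coeff_zero, WittVector.one_coeff_zero] using h3
    · intro h
      rw [ht_def, ← map_pow, h, map_one]
  have ht : IsPrimitiveRoot t w := by
    refine ⟨(htw w).mpr hα.pow_eq_one, fun l hl => ?_⟩
    exact hα.dvd_of_pow_eq_one l ((htw l).mp hl)
  -- evaluate the polynomial identity at t
  have hcycl : Polynomial.aeval t (Polynomial.cyclotomic w ℤ) = 0 := by
    have hroot : Polynomial.IsRoot (Polynomial.cyclotomic w (WittVector p k)) t :=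
      ht.isRoot_cyclotomic hw
    rwa [Polynomial.aeval_def, Polynomial.eval₂_eq_eval_map, Polynomial.map_cyclotomic]
  set x : WittVector p k := Polynomial.aeval t g with hx_def
  set y : WittVector p k := Polynomial.aeval (t ^ (w - 1)) g with hy_def
  have heq : x * y = (u : WittVector p k) := by
    have := congrArg (Polynomial.aeval t) hgq
    simp only [map_sub, map_mul, Polynomial.aeval_comp, Polynomial.aeval_X_pow,
      Polynomial.aeval_C, hcycl, zero_mul, algebraMap_int_eq, eq_intCast, Int.cast_natCast,
      map_intCast, map_natCast] at this
    rw [← hx_def, ← hy_def] at this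
    exact sub_eq_zero.mp this
  -- the Frobenius-power automorphism σ maps x to y
  set σ : WittVector p k →+* WittVector p k :=
    WittVector.map ((frobenius k p) ^ r) with hσ_def
  have hσt : σ t = t ^ (w - 1) := by
    have h1 : ((frobenius k p) ^ r) α = α ^ p ^ r := by
      rw [RingHom.coe_pow]; exact iterate_frobenius (R := k) (p := p) r α
    have h2 : α ^ p ^ r = α ^ (w - 1) := by
      have e1 : α ^ p ^ r * α = 1 := by
        rw [← pow_succ]; exact hα.pow_eq_one_iff_dvd _ |>.mpr hr
      have e2 : α ^ (w - 1) * α = 1 := by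
        rw [← pow_succ, Nat.sub_add_cancel hw]; exact hα.pow_eq_one
      exact mul_right_cancel₀ (hα.ne_zero hw.ne') (e1.trans e2.symm)
    rw [hσ_def, ht_def, WittVector.map_teichmuller, h1, h2, map_pow]
  have hσx : σ x = y := by
    have h1 : σ (Polynomial.aeval t g) = Polynomial.aeval (σ t) g :=
      (Polynomial.aeval_algHom_apply σ.toIntAlgHom t g).symm
    rw [hx_def, hy_def, h1, hσt]
  -- decompose u = p^c * m with m a unit in 𝕎 k
  set m : ℕ := u / p ^ c with hm_def
  have hm : u = p ^ c * m := (Nat.mul_div_cancel' hc.1).symm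
  have hpm : ¬ p ∣ m := by
    intro hdvd
    refine hc.2 ?_
    rw [hm, pow_succ]
    exact mul_dvd_mul_left _ hdvd
  have hmu : IsUnit (m : WittVector p k) := by
    have hcop : IsCoprime (m : ℤ) (p : ℤ) :=
      Nat.isCoprime_iff_coprime.mpr (Nat.coprime_comm.mp (hp.coprime_iff_not_dvd.mpr hpm))
    obtain ⟨a, b, hab⟩ := hcop
    have hab' : IsUnit (a • (m : WittVector p k) + b • (p : WittVector p k)) := by
      have : ((a * m + b * p : ℤ) : WittVector p k) = 1 := by rw [hab]; norm_num
      push_cast at this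
      rw [zsmul_eq_mul, zsmul_eq_mul, this]
      exact isUnit_one
    rcases IsLocalRing.isUnit_or_isUnit_of_isUnit_add hab' with h | h
    · exact isUnit_of_mul_isUnit_right (by rwa [zsmul_eq_mul] at h)
    · exfalso
      exact (WittVector.irreducible p).not_isUnit
        (isUnit_of_mul_isUnit_right (by rwa [zsmul_eq_mul] at h))
  have hirr : Irreducible (p : WittVector p k) := WittVector.irreducible p
  have hu0 : (u : WittVector p k) ≠ 0 := by
    rw [hm]; push_cast
    exact mul_ne_zero (pow_ne_zero _ hirr.ne_zero) hmu.ne_zero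
  have hx0 : x ≠ 0 := by
    intro h; rw [h, zero_mul] at heq; exact hu0 heq.symm
  obtain ⟨a, b, hb⟩ := WittVector.exists_eq_pow_p_mul' x hx0
  have hy : y = (p : WittVector p k) ^ a * σ (b : WittVector p k) := by
    rw [← hσx, hb, map_mul, map_pow, map_natCast]
  have hσb : IsUnit (σ (b : WittVector p k)) := b.isUnit.map σ
  have hvx : IsDiscreteValuationRing.addVal (WittVector p k) x = a :=
    IsDiscreteValuationRing.addVal_def x b hirr a (by rw [hb, mul_comm])
  have hvy : IsDiscreteValuationRing.addVal (WittVector p k) y = a :=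
    IsDiscreteValuationRing.addVal_def y hσb.unit hirr a
      (by rw [hy, mul_comm, IsUnit.unit_spec])
  have hvu : IsDiscreteValuationRing.addVal (WittVector p k) (u : WittVector p k) = c := by
    refine IsDiscreteValuationRing.addVal_def _ hmu.unit hirr c ?_
    rw [IsUnit.unit_spec, hm]; push_cast; ring
  have hkey : IsDiscreteValuationRing.addVal (WittVector p k) (x * y) = a + a := by
    rw [IsDiscreteValuationRing.addVal_mul, hvx, hvy]
  rw [heq, hvu] at hkey
  have : c = a + a := by exact_mod_cast hkey
  exact ⟨a, this⟩


/-- A prime `p` is self-conjugate modulo `w`: writing `w = p^s · u'` with `gcd(u',p) = 1`,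
there exists `r` with `p^r ≡ -1 (mod u')`. -/
def SelfConjPrime (p w : ℕ) : Prop :=
  ∃ r : ℕ, (p : ZMod (w / p ^ w.factorization p)) ^ r = -1

/-- Let `p` be a prime divisor of `u` with `p^c ∥ u`, and let `w` be a positive integer
with `p ∤ w` such that `p` is self-conjugate modulo `w`.  If `X ∈ ℤ[ζ_w]` satisfies
`X·conj(X) = u`, then `c` is even. -/
theorem exact_exponent_even_of_selfconj
    (u p c w : ℕ) (hp : p.Prime) (hu : 0 < u) (hw : 0 < w)
    (hc : p ^ c ∣ u ∧ ¬ p ^ (c + 1) ∣ u)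
    (hpw : ¬ p ∣ w) (hsc : SelfConjPrime p w)
    (ζ : ℂ) (hζ : IsPrimitiveRoot ζ w)
    (X : ℂ) (hX : X ∈ Algebra.adjoin ℤ ({ζ} : Set ℂ))
    (hXX : X * (starRingEnd ℂ) X = (u : ℂ)) :
    Even c := by
  haveI : Fact p.Prime := ⟨hp⟩
  haveI : NeZero w := ⟨hw.ne'⟩
  -- extract `r` with `w ∣ p^r + 1`
  obtain ⟨r, hr⟩ := hsc
  rw [Nat.factorization_eq_zero_of_not_dvd hpw, pow_zero, Nat.div_one] at hr
  have hrw : w ∣ p ^ r + 1 := by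
    have h0 : ((p ^ r + 1 : ℕ) : ZMod w) = 0 := by push_cast [hr]; ring
    exact (ZMod.natCast_eq_zero_iff _ _).mp h0
  -- write X = g(ζ) for an integer polynomial g
  rw [Algebra.adjoin_singleton_eq_range_aeval] at hX
  obtain ⟨g, hg0⟩ := hX
  have hg : Polynomial.aeval ζ g = X := hg0
  -- conj ζ = ζ^(w-1)
  have hζne : ζ ≠ 0 := hζ.ne_zero hw.ne'
  have hconjζ : (starRingEnd ℂ) ζ = ζ ^ (w - 1) := by
    have h1 : ζ ^ (w - 1) * ζ = 1 := by
      rw [← pow_succ, Nat.sub_add_cancel hw]; exact hζ.pow_eq_one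
    have h2 : (starRingEnd ℂ) ζ * ζ = 1 := by
      rw [mul_comm, Complex.mul_conj]
      norm_cast
      rw [Complex.normSq_eq_norm_sq]
      have := hζ.norm'_eq_one hw.ne'
      rw [this]; norm_num
    exact mul_right_cancel₀ hζne (h2.trans h1.symm)
  have hconjX : (starRingEnd ℂ) X = Polynomial.aeval (ζ ^ (w - 1)) g := by
    rw [← hg, ← hconjζ]
    exact (Polynomial.aeval_algHom_apply (starRingEnd ℂ).toIntAlgHom ζ g).symm
  -- the key integral polynomial identity
  have hGζ : Polynomial.aeval ζ
      (g * g.comp (Polynomial.X ^ (w - 1)) - Polynomial.C (u : ℤ)) = 0 := by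
    simp only [map_sub, map_mul, Polynomial.aeval_comp, Polynomial.aeval_X_pow,
      Polynomial.aeval_C, algebraMap_int_eq, eq_intCast, Int.cast_natCast,
      map_intCast, map_natCast]
    rw [hg, ← hconjX, hXX, sub_self]
  have hdvd : minpoly ℤ ζ ∣ g * g.comp (Polynomial.X ^ (w - 1)) - Polynomial.C (u : ℤ) :=
    minpoly.isIntegrallyClosed_dvd (hζ.isIntegral hw) hGζ
  rw [← Polynomial.cyclotomic_eq_minpoly hζ hw] at hdvd
  obtain ⟨q, hq⟩ := hdvd
  -- build a finite field of characteristic p containing a primitive w-th root of unity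
  have hcop : Nat.Coprime p w := hp.coprime_iff_not_dvd.mpr hpw
  set f : ℕ := orderOf (ZMod.unitOfCoprime p hcop) with hf_def
  have hf0 : f ≠ 0 := (orderOf_pos _).ne'
  have hwf : w ∣ p ^ f - 1 := by
    have h1 : ((p : ZMod w)) ^ f = 1 := by
      have h2 := pow_orderOf_eq_one (ZMod.unitOfCoprime p hcop)
      have h3 := congrArg (Units.val) h2
      push_cast at h3
      rwa [ZMod.coe_unitOfCoprime] at h3
    have h4 : ((p ^ f : ℕ) : ZMod w) = ((1 : ℕ) : ZMod w) := by push_cast [h1]; ring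
    have h5 : 1 ≡ p ^ f [MOD w] := ((ZMod.natCast_eq_natCast_iff _ _ _).mp h4).symm
    exact (Nat.modEq_iff_dvd' (Nat.one_le_pow _ _ hp.pos)).mp h5
  have hcard : Nat.card (GaloisField p f)ˣ = p ^ f - 1 := by
    rw [Nat.card_units, GaloisField.card p f hf0]
  obtain ⟨gen, hgen⟩ := IsCyclic.exists_ofOrder_eq_natCard (α := (GaloisField p f)ˣ)
  have hgen' : orderOf gen = p ^ f - 1 := by rw [hgen, hcard]
  have hord : orderOf (gen ^ (orderOf gen / w)) = w := by
    refine orderOf_pow_orderOf_div ?_ ?_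
    · rw [hgen']
      have : 1 < p ^ f := Nat.one_lt_pow hf0 hp.one_lt
      omega
    · rw [hgen']; exact hwf
  have hα : IsPrimitiveRoot ((gen ^ (orderOf gen / w) : (GaloisField p f)ˣ) : GaloisField p f) w := by
    have h6 : orderOf ((gen ^ (orderOf gen / w) : (GaloisField p f)ˣ) : GaloisField p f) = w := by
      rw [orderOf_units]; exact hord
    have h7 := IsPrimitiveRoot.orderOf
      ((gen ^ (orderOf gen / w) : (GaloisField p f)ˣ) : GaloisField p f)
    rwa [h6] at h7
  exact witt_core u p c w r hp hw hc hrw _ hα g q hq
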